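/- arXiv:2601.21898 — 3 statements merged into one kernel-verified Lean document; each statement's English description precedes it below -/
import Mathlib

section
/- Let E be a real inner product space, J : E → ℝ differentiable with gradient ∇J that is L-Lipschitz (L > 0), and J bounded below by J_inf. Let (Ω, 𝒜, P) be a probability space with filtration (𝓕_t)_{t∈ℕ}, and let (W_t)_{t≥0}, (G_t)_{t≥0} be E-valued random variables such that W_t is 𝓕_t-measurable, W_{t+1} = W_t − η·G_t for a fixed step size η ∈ (0, 1/L], and almost surely the conditional expectation satisfies E[G_t | 𝓕_t] = ∇J(W_t) and E[‖G_t − ∇J(W_t)‖² | 𝓕_t] ≤ σ², with J(W_t) and ‖G_t‖² integrable for all t. Then for every integer T ≥ 1: min_{0 ≤ t ≤ T−1} E[‖∇J(W_t)‖²] ≤ 2·(E[J(W_0)] − J_inf)/(η·T) + L·η·σ². -/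
open MeasureTheory

open scoped RealInnerProductSpace

section Aux

lemma sgd_descent_lemma {E : Type*} [NormedAddCommGroup E] [InnerProductSpace ℝ E]
    [CompleteSpace E]
    (J : E → ℝ) (L : ℝ) (hL : 0 ≤ L) (hdiff : Differentiable ℝ J)
    (hlip : ∀ x y : E, ‖gradient J x - gradient J y‖ ≤ L * ‖x - y‖)
    (x y : E) :
    J y ≤ J x + ⟪gradient J x, y - x⟫ + L / 2 * ‖y - x‖ ^ 2 := by
  set v := y - x with hv
  set line : ℝ → E := fun s => x + s • v with hline_def
  have hline : ∀ s : ℝ, HasDerivAt line v s := by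
    intro s
    simpa [hline_def] using ((hasDerivAt_id s).smul_const v).const_add x
  set φ : ℝ → ℝ := fun s => ⟪gradient J (line s), v⟫ with hφ_def
  have hg : ∀ s : ℝ, HasDerivAt (fun s => J (line s)) (φ s) s := by
    intro s
    have h2 : HasFDerivAt J ((InnerProductSpace.toDual ℝ E) (gradient J (line s))) (line s) :=
      hasGradientAt_iff_hasFDerivAt.mp (hdiff (line s)).hasGradientAt
    have h3 := h2.comp_hasDerivAt s (hline s)
    rw [InnerProductSpace.toDual_apply_apply] at h3
    exact h3
  have hlipg : LipschitzWith (Real.toNNReal L) (gradient J) := by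
    apply LipschitzWith.of_dist_le_mul
    intro a b
    simpa [dist_eq_norm, Real.coe_toNNReal L hL] using hlip a b
  have hcontφ : Continuous φ := by
    exact (hlipg.continuous.comp (by continuity : Continuous line)).inner continuous_const
  have hftc : ∫ s in (0:ℝ)..1, φ s = J (line 1) - J (line 0) :=
    intervalIntegral.integral_eq_sub_of_hasDerivAt (fun t _ => hg t)
      (hcontφ.intervalIntegrable 0 1)
  have hb : ∀ s ∈ Set.Icc (0:ℝ) 1, φ s ≤ ⟪gradient J x, v⟫ + (L * ‖v‖ ^ 2) * s := by
    intro s hs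
    have h1 : φ s - ⟪gradient J x, v⟫ = ⟪gradient J (line s) - gradient J x, v⟫ := by
      rw [inner_sub_left]
    have h2 : ⟪gradient J (line s) - gradient J x, v⟫ ≤ L * s * ‖v‖ ^ 2 := by
      calc ⟪gradient J (line s) - gradient J x, v⟫ ≤ ‖gradient J (line s) - gradient J x‖ * ‖v‖ :=
            real_inner_le_norm _ _
        _ ≤ (L * ‖line s - x‖) * ‖v‖ := by
            gcongr; exact hlip _ _
        _ = L * s * ‖v‖ ^ 2 := by
            simp only [hline_def, add_sub_cancel_left, norm_smul, Real.norm_eq_abs,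
              abs_of_nonneg hs.1]
            ring
    nlinarith [h1, h2]
  have hmono : ∫ s in (0:ℝ)..1, φ s
      ≤ ∫ s in (0:ℝ)..1, (⟪gradient J x, v⟫ + (L * ‖v‖ ^ 2) * s) := by
    apply intervalIntegral.integral_mono_on (by norm_num) (hcontφ.intervalIntegrable 0 1)
    · exact (continuous_const.add (continuous_const.mul continuous_id')).intervalIntegrable _ _
    · exact hb
  have hrhs : ∫ s in (0:ℝ)..1, (⟪gradient J x, v⟫ + (L * ‖v‖ ^ 2) * s)
      = ⟪gradient J x, v⟫ + L / 2 * ‖v‖ ^ 2 := by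
    rw [intervalIntegral.integral_add (f := fun _ => ⟪gradient J x, v⟫)
      (g := fun s : ℝ => (L * ‖v‖ ^ 2) * s) intervalIntegrable_const
      ((continuous_const.mul continuous_id').intervalIntegrable _ _),
      intervalIntegral.integral_const_mul, integral_id, intervalIntegral.integral_const]
    norm_num
    ring
  have hfin : J (line 1) - J (line 0) ≤ ⟪gradient J x, v⟫ + L / 2 * ‖v‖ ^ 2 := by
    rw [← hftc]; rw [hrhs] at hmono; exact hmono
  have h1 : line 1 = y := by simp [hline_def, hv]
  have h0 : line 0 = x := by simp [hline_def]
  rw [h1, h0] at hfin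
  linarith

variable {Ω : Type*} {mΩ : MeasurableSpace Ω} {μ : Measure Ω} [IsProbabilityMeasure μ]
 {E : Type*} [NormedAddCommGroup E] [InnerProductSpace ℝ E] [CompleteSpace E]

lemma sgd_condExpL2_ae_eq_condexp {m : MeasurableSpace Ω} (hm : m ≤ mΩ) {G : Ω → E}
    (hG : MemLp G 2 μ) :
    (condExpL2 E ℝ hm (hG.toLp G) : Ω → E) =ᵐ[μ] μ[G | m] := by
  refine ae_eq_condExp_of_forall_setIntegral_eq hm (hG.integrable one_le_two)
    (fun s hs hμs => integrableOn_condExpL2_of_measure_ne_top hm hμs.ne _)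
    (fun s hs hμs => ?_) (aestronglyMeasurable_condExpL2 hm _)
  rw [integral_condExpL2_eq hm (hG.toLp G) hs hμs.ne]
  exact integral_congr_ae (ae_restrict_of_ae hG.coeFn_toLp)

omit [CompleteSpace E] in
lemma sgd_L2inner_eq {Ω' : Type*} {mm : MeasurableSpace Ω'} {μ' : Measure Ω'}
    (f g : Lp E 2 μ') :
    @inner ℝ _ _ f g = ∫ ω, ⟪f ω, g ω⟫ ∂μ' := L2.inner_def f g

lemma sgd_integral_inner_eq_sq {m : MeasurableSpace Ω} (hm : m ≤ mΩ) {F G : Ω → E}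
    (hFm : AEStronglyMeasurable[m] F μ) (hG : MemLp G 2 μ)
    (hmean : μ[G | m] =ᵐ[μ] F) :
    MemLp F 2 μ ∧ ∫ ω, ⟪F ω, G ω⟫ ∂μ = ∫ ω, ‖F ω‖ ^ 2 ∂μ := by
  have hL2 : (condExpL2 E ℝ hm (hG.toLp G) : Ω → E) =ᵐ[μ] F :=
    (sgd_condExpL2_ae_eq_condexp hm hG).trans hmean
  have hF2 : MemLp F 2 μ := (Lp.memLp _).ae_eq hL2
  refine ⟨hF2, ?_⟩
  have h2 : AEStronglyMeasurable[m] (hF2.toLp F : Ω → E) μ :=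
    hFm.congr hF2.coeFn_toLp.symm
  have h3 := inner_condExpL2_eq_inner_fun (𝕜 := ℝ) hm (hG.toLp G) (hF2.toLp F) h2
  calc ∫ ω, ⟪F ω, G ω⟫ ∂μ
      = @inner ℝ _ _ (hF2.toLp F) (hG.toLp G) := by
        rw [sgd_L2inner_eq]
        refine integral_congr_ae ?_
        filter_upwards [hF2.coeFn_toLp, hG.coeFn_toLp] with ω h1 h2
        rw [h1, h2]
    _ = @inner ℝ _ _ ((condExpL2 E ℝ hm (hG.toLp G) : Ω →₂[μ] E)) (hF2.toLp F) := by
        rw [h3, real_inner_comm]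
    _ = ∫ ω, ‖F ω‖ ^ 2 ∂μ := by
        rw [sgd_L2inner_eq]
        refine integral_congr_ae ?_
        filter_upwards [hL2, hF2.coeFn_toLp] with ω h1 h2
        rw [h1, h2, real_inner_self_eq_norm_sq]

end Aux

/-- **Stationarity of SGD**: for an `L`-smooth objective `J` bounded below by `Jinf`,
SGD iterates `W (t+1) = W t - η • G t` with unbiased stochastic gradients of conditional
variance at most `σ²` and step size `η ∈ (0, 1/L]` satisfy, for every `T ≥ 1`,
`min_{0 ≤ t ≤ T-1} E[‖∇J(W t)‖²] ≤ 2 (E[J(W 0)] - Jinf)/(η T) + L η σ²`. -/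
theorem sgd_min_expected_sq_grad_le
    {E : Type*} [NormedAddCommGroup E] [InnerProductSpace ℝ E] [CompleteSpace E]
    {Ω : Type*} {mΩ : MeasurableSpace Ω} {μ : Measure Ω} [IsProbabilityMeasure μ]
    (ℱ : Filtration ℕ mΩ)
    (J : E → ℝ) (L Jinf σ η : ℝ)
    (hL : 0 < L)
    (hdiff : Differentiable ℝ J)
    (hlip : ∀ x y : E, ‖gradient J x - gradient J y‖ ≤ L * ‖x - y‖)
    (hbd : ∀ x : E, Jinf ≤ J x)
    (hη : 0 < η) (hηL : η ≤ 1 / L)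
    (W G : ℕ → Ω → E)
    (hWmeas : ∀ t, StronglyMeasurable[ℱ t] (W t))
    (hrec : ∀ t ω, W (t + 1) ω = W t ω - η • G t ω)
    (hmean : ∀ t, μ[G t | ℱ t] =ᵐ[μ] fun ω => gradient J (W t ω))
    (hvar : ∀ t, ∀ᵐ ω ∂μ,
      (μ[fun ω' => ‖G t ω' - gradient J (W t ω')‖ ^ 2 | ℱ t]) ω ≤ σ ^ 2)
    (hJint : ∀ t, Integrable (fun ω => J (W t ω)) μ)
    (hGint : ∀ t, Integrable (fun ω => ‖G t ω‖ ^ 2) μ)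
    (T : ℕ) (hT : 1 ≤ T) :
    (Finset.range T).inf' (Finset.nonempty_range_iff.mpr (by omega))
        (fun t => ∫ ω, ‖gradient J (W t ω)‖ ^ 2 ∂μ)
      ≤ 2 * ((∫ ω, J (W 0 ω) ∂μ) - Jinf) / (η * T) + L * η * σ ^ 2 := by
  have hgradcont : Continuous (gradient J) := by
    have : LipschitzWith (Real.toNNReal L) (gradient J) := by
      apply LipschitzWith.of_dist_le_mul
      intro a b
      simpa [dist_eq_norm, Real.coe_toNNReal L hL.le] using hlip a b
    exact this.continuous
  set a : ℕ → ℝ := fun t => ∫ ω, J (W t ω) ∂μ with ha_def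
  set b : ℕ → ℝ := fun t => ∫ ω, ‖gradient J (W t ω)‖ ^ 2 ∂μ with hb_def
  set C : ℝ := L * η ^ 2 * σ ^ 2 / 2 with hC_def
  have hb_nonneg : ∀ t, 0 ≤ b t := fun t =>
    integral_nonneg fun ω => by positivity
  -- the one-step inequality
  have step : ∀ t, a (t + 1) + η / 2 * b t ≤ a t + C := by
    intro t
    set F : Ω → E := fun ω => gradient J (W t ω) with hF_def
    have hFsm : StronglyMeasurable[ℱ t] F :=
      hgradcont.comp_stronglyMeasurable (hWmeas t)
    have hFm : AEStronglyMeasurable[ℱ t] F μ :=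
      StronglyMeasurable.aestronglyMeasurable hFsm
    have hGeq : G t = fun ω => η⁻¹ • (W t ω - W (t + 1) ω) := by
      funext ω
      rw [hrec t ω]
      rw [sub_sub_cancel, smul_smul, inv_mul_cancel₀ hη.ne', one_smul]
    have hGsm : AEStronglyMeasurable (G t) μ := by
      rw [hGeq]
      exact ((((hWmeas t).mono (ℱ.le t)).sub
        ((hWmeas (t + 1)).mono (ℱ.le (t + 1)))).const_smul η⁻¹).aestronglyMeasurable
    have hG2 : MemLp (G t) 2 μ := (memLp_two_iff_integrable_sq_norm hGsm).mpr (hGint t)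
    obtain ⟨hF2, hkey⟩ := sgd_integral_inner_eq_sq (ℱ.le t) hFm hG2 (hmean t)
    have hF2int : Integrable (fun ω => ‖F ω‖ ^ 2) μ :=
      (memLp_two_iff_integrable_sq_norm (hFsm.mono (ℱ.le t)).aestronglyMeasurable).mp hF2
    have hFGint : Integrable (fun ω => ⟪F ω, G t ω⟫) μ := by
      have := L2.integrable_inner (𝕜 := ℝ) (hF2.toLp F) (hG2.toLp (G t))
      refine this.congr ?_
      filter_upwards [hF2.coeFn_toLp, hG2.coeFn_toLp] with ω h1 h2
      rw [h1, h2]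
    -- second moment bound
    have hdiffsq : Integrable (fun ω => ‖G t ω - F ω‖ ^ 2) μ :=
      (memLp_two_iff_integrable_sq_norm
        (hGsm.sub (hFsm.mono (ℱ.le t)).aestronglyMeasurable)).mp (hG2.sub hF2)
    have hvarint : ∫ ω, ‖G t ω - F ω‖ ^ 2 ∂μ ≤ σ ^ 2 := by
      have h1 : ∫ ω, ‖G t ω - F ω‖ ^ 2 ∂μ
          = ∫ ω, (μ[fun ω' => ‖G t ω' - gradient J (W t ω')‖ ^ 2 | ℱ t]) ω ∂μ :=
        (integral_condExp (ℱ.le t)).symm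
      rw [h1]
      calc ∫ ω, (μ[fun ω' => ‖G t ω' - gradient J (W t ω')‖ ^ 2 | ℱ t]) ω ∂μ
          ≤ ∫ _, σ ^ 2 ∂μ := integral_mono_ae integrable_condExp (integrable_const _) (hvar t)
        _ = σ ^ 2 := by simp
    have hGsq : ∫ ω, ‖G t ω‖ ^ 2 ∂μ ≤ σ ^ 2 + b t := by
      have hpt : ∀ ω, ‖G t ω‖ ^ 2 = ‖G t ω - F ω‖ ^ 2 + 2 * ⟪F ω, G t ω⟫ - ‖F ω‖ ^ 2 := by
        intro ω
        have h := norm_add_sq_real (G t ω - F ω) (F ω)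
        rw [sub_add_cancel] at h
        rw [h, inner_sub_left, real_inner_self_eq_norm_sq, real_inner_comm]
        ring
      have : ∫ ω, ‖G t ω‖ ^ 2 ∂μ
          = (∫ ω, ‖G t ω - F ω‖ ^ 2 ∂μ) + 2 * (∫ ω, ⟪F ω, G t ω⟫ ∂μ) - ∫ ω, ‖F ω‖ ^ 2 ∂μ := by
        simp_rw [hpt]
        have hadd : Integrable (fun ω => ‖G t ω - F ω‖ ^ 2 + 2 * ⟪F ω, G t ω⟫) μ :=
          hdiffsq.add (hFGint.const_mul 2)
        rw [integral_sub hadd hF2int, integral_add hdiffsq (hFGint.const_mul 2),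
          integral_const_mul]
      rw [this, hkey]
      have hbt : b t = ∫ ω, ‖F ω‖ ^ 2 ∂μ := rfl
      rw [hbt]
      linarith
    -- descent inequality, pointwise then integrated
    have hpt : ∀ ω, J (W (t + 1) ω)
        ≤ J (W t ω) - η * ⟪F ω, G t ω⟫ + L * η ^ 2 / 2 * ‖G t ω‖ ^ 2 := by
      intro ω
      have h := sgd_descent_lemma J L hL.le hdiff hlip (W t ω) (W (t + 1) ω)
      have hd : W (t + 1) ω - W t ω = -(η • G t ω) := by rw [hrec t ω]; abel
      rw [hd] at h
      rw [inner_neg_right, inner_smul_right, norm_neg, norm_smul] at h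
      simp only [Real.norm_eq_abs, abs_of_nonneg hη.le] at h
      calc J (W (t + 1) ω) ≤ J (W t ω) + -(η * ⟪F ω, G t ω⟫) + L / 2 * (η * ‖G t ω‖) ^ 2 := h
        _ = J (W t ω) - η * ⟪F ω, G t ω⟫ + L * η ^ 2 / 2 * ‖G t ω‖ ^ 2 := by ring
    have hint : a (t + 1) ≤ a t - η * (∫ ω, ⟪F ω, G t ω⟫ ∂μ)
        + L * η ^ 2 / 2 * (∫ ω, ‖G t ω‖ ^ 2 ∂μ) := by
      have h1 : a (t + 1) ≤ ∫ ω, (J (W t ω) - η * ⟪F ω, G t ω⟫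
          + L * η ^ 2 / 2 * ‖G t ω‖ ^ 2) ∂μ := by
        refine integral_mono (hJint (t + 1)) ?_ hpt
        exact ((hJint t).sub (hFGint.const_mul η)).add ((hGint t).const_mul (L * η ^ 2 / 2))
      have hsub : Integrable (fun ω => J (W t ω) - η * ⟪F ω, G t ω⟫) μ :=
        (hJint t).sub (hFGint.const_mul η)
      rw [integral_add hsub ((hGint t).const_mul (L * η ^ 2 / 2)),
        integral_sub (hJint t) (hFGint.const_mul η), integral_const_mul,
        integral_const_mul] at h1
      exact h1
    rw [hkey] at hint
    have hbt : b t = ∫ ω, ‖F ω‖ ^ 2 ∂μ := rfl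
    rw [← hbt] at hint
    have hLη : L * η ≤ 1 := by
      have h := mul_le_mul_of_nonneg_left hηL hL.le
      rwa [mul_one_div, div_self hL.ne'] at h
    have hcoef : 0 ≤ L * η ^ 2 / 2 := by positivity
    nlinarith [hb_nonneg t, mul_le_mul_of_nonneg_left hGsq hcoef,
      mul_le_mul_of_nonneg_right hLη (hb_nonneg t)]
  -- telescoping sum
  have hsum : ∀ n : ℕ, a n + η / 2 * ∑ t ∈ Finset.range n, b t ≤ a 0 + n * C := by
    intro n
    induction n with
    | zero => simp
    | succ n ih =>
        rw [Finset.sum_range_succ]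
        push_cast
        have := step n
        nlinarith [this, ih]
  have hJinf : Jinf ≤ a T := by
    have : ∫ (_ : Ω), Jinf ∂μ ≤ a T :=
      integral_mono (integrable_const _) (hJint T) fun ω => hbd _
    simpa using this
  -- min bounded by average
  set mval : ℝ := (Finset.range T).inf' (Finset.nonempty_range_iff.mpr (by omega)) b with hm_def
  have hmle : (T : ℝ) * mval ≤ ∑ t ∈ Finset.range T, b t := by
    have := Finset.card_nsmul_le_sum (Finset.range T) b mval
      (fun i hi => Finset.inf'_le _ hi)
    simpa [nsmul_eq_mul] using this
  have hTpos : (0 : ℝ) < T := by exact_mod_cast hT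
  have hηT : (0 : ℝ) < η * T := by positivity
  have hmain : η / 2 * ((T : ℝ) * mval) ≤ a 0 - Jinf + T * C := by
    have h1 := hsum T
    have h2 : η / 2 * ((T : ℝ) * mval) ≤ η / 2 * ∑ t ∈ Finset.range T, b t := by
      apply mul_le_mul_of_nonneg_left hmle (by positivity)
    linarith
  have hfinal : mval ≤ (2 * (a 0 - Jinf) + L * η * σ ^ 2 * (η * T)) / (η * T) := by
    rw [le_div_iff₀ hηT]
    have : (T : ℝ) * C = L * η * σ ^ 2 * (η * T) / 2 := by rw [hC_def]; ring
    nlinarith [hmain]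
  have heq : (2 * (a 0 - Jinf) + L * η * σ ^ 2 * (η * T)) / (η * T)
      = 2 * (a 0 - Jinf) / (η * T) + L * η * σ ^ 2 := by
    field_simp
  rw [heq] at hfinal
  exact hfinal
end

section
/- Let E be a real inner product space, J : E → ℝ differentiable with gradient ∇J that is L-Lipschitz (L > 0), and J bounded below by J_inf. Let (Ω, 𝒜, P) be a probability space with filtration (𝓕_t)_{t∈ℕ}, and let (W_t)_{t≥0}, (G_t)_{t≥0} be E-valued random variables such that W_t is 𝓕_t-measurable, W_{t+1} = W_t − η·G_t for a fixed η ∈ (0, 1/L], and almost surely E[G_t | 𝓕_t] = ∇J(W_t) and E[‖G_t − ∇J(W_t)‖² | 𝓕_t] ≤ σ², with J(W_t) and ‖G_t‖² integrable for all t. Then for every integer T ≥ 1: (1/T)·Σ_{t=0}^{T−1} E[‖∇J(W_t)‖²] ≤ 2·(E[J(W_0)] − J_inf)/(η·T) + L·η·σ². -/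
open MeasureTheory
open scoped RealInnerProductSpace

lemma sgd_grad_sq_le {E : Type*} [NormedAddCommGroup E] [InnerProductSpace ℝ E] [CompleteSpace E]
    (J : E → ℝ) (L Jinf : ℝ) (hL : 0 < L) (hdiff : Differentiable ℝ J)
    (hlip : ∀ x y : E, ‖gradient J x - gradient J y‖ ≤ L * ‖x - y‖)
    (hbd : ∀ x : E, Jinf ≤ J x) (x : E) :
    ‖gradient J x‖ ^ 2 ≤ 2 * L * (J x - Jinf) := by
  have h := sgd_descent_lemma J L hL.le hdiff hlip x (x - L⁻¹ • gradient J x)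
  have h1 : x - L⁻¹ • gradient J x - x = -(L⁻¹ • gradient J x) := by abel
  rw [h1] at h
  have h2 : ⟪gradient J x, -(L⁻¹ • gradient J x)⟫ = -(L⁻¹ * ‖gradient J x‖ ^ 2) := by
    rw [inner_neg_right, real_inner_smul_right, real_inner_self_eq_norm_sq]
  have h3 : ‖-(L⁻¹ • gradient J x)‖ ^ 2 = L⁻¹ ^ 2 * ‖gradient J x‖ ^ 2 := by
    rw [norm_neg, norm_smul]
    simp [abs_of_pos (inv_pos.mpr hL), mul_pow]
  rw [h2, h3] at h
  have h4 := hbd (x - L⁻¹ • gradient J x)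
  have hL' : L⁻¹ * L = 1 := inv_mul_cancel₀ hL.ne'
  set N := ‖gradient J x‖ ^ 2 with hN
  have e : L / 2 * (L⁻¹ ^ 2 * N) = L⁻¹ / 2 * N := by
    field_simp
  rw [e] at h
  have key : L⁻¹ / 2 * N ≤ J x - Jinf := by linarith
  have := mul_le_mul_of_nonneg_left key (by positivity : (0:ℝ) ≤ 2 * L)
  calc N = 2 * L * (L⁻¹ / 2 * N) := by field_simp
    _ ≤ 2 * L * (J x - Jinf) := this

lemma sgd_condexpL2_ae_eq_condexp {Ω E : Type*} [NormedAddCommGroup E] [InnerProductSpace ℝ E]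
    [CompleteSpace E] {m mΩ : MeasurableSpace Ω} (hm : m ≤ mΩ) {μ : Measure Ω}
    [IsFiniteMeasure μ] {G : Ω → E} (hG : MemLp G 2 μ) :
    (condExpL2 E ℝ hm (hG.toLp G) : Ω → E) =ᵐ[μ] μ[G|m] := by
  refine ae_eq_condExp_of_forall_setIntegral_eq hm (hG.integrable one_le_two)
    (fun s _ hμs => integrableOn_condExpL2_of_measure_ne_top hm hμs.ne _)
    (fun s hs hμs => ?_) (aestronglyMeasurable_condExpL2 hm _)
  rw [integral_condExpL2_eq hm (hG.toLp G) hs hμs.ne]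
  exact setIntegral_congr_ae (hm s hs) (hG.coeFn_toLp.mono fun ω hω _ => hω)

lemma sgd_integral_inner_eq {Ω E : Type*} [NormedAddCommGroup E] [InnerProductSpace ℝ E]
    [CompleteSpace E] {m mΩ : MeasurableSpace Ω} (hm : m ≤ mΩ) {μ : Measure Ω}
    [IsFiniteMeasure μ] {f G : Ω → E} (hfm : AEStronglyMeasurable[m] f μ)
    (hf2 : MemLp f 2 μ) (hG2 : MemLp G 2 μ) (hcond : μ[G|m] =ᵐ[μ] f) :
    ∫ ω, ⟪f ω, G ω⟫ ∂μ = ∫ ω, ‖f ω‖ ^ 2 ∂μ := by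
  set fl := hf2.toLp f with hfl
  set Gl := hG2.toLp G with hGl
  have hflm : AEStronglyMeasurable[m] (fl : Ω → E) μ :=
    hfm.congr hf2.coeFn_toLp.symm
  have h1 : ⟪(condExpL2 E ℝ hm Gl : Ω →₂[μ] E), fl⟫ = ⟪Gl, fl⟫ :=
    inner_condExpL2_eq_inner_fun hm Gl fl hflm
  have hce : (condExpL2 E ℝ hm Gl : Ω → E) =ᵐ[μ] f :=
    (sgd_condexpL2_ae_eq_condexp hm hG2).trans hcond
  rw [L2.inner_def, L2.inner_def] at h1
  have h2 : ∫ ω, ⟪(condExpL2 E ℝ hm Gl : Ω → E) ω, (fl : Ω → E) ω⟫ ∂μ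
      = ∫ ω, ‖f ω‖ ^ 2 ∂μ := by
    refine integral_congr_ae ?_
    filter_upwards [hce, hf2.coeFn_toLp] with ω h1 h2
    rw [h1, h2, real_inner_self_eq_norm_sq]
  have h3 : ∫ ω, ⟪(Gl : Ω → E) ω, (fl : Ω → E) ω⟫ ∂μ = ∫ ω, ⟪f ω, G ω⟫ ∂μ := by
    refine integral_congr_ae ?_
    filter_upwards [hG2.coeFn_toLp, hf2.coeFn_toLp] with ω h1 h2
    rw [h1, h2, real_inner_comm]
  rw [h2, h3] at h1
  exact h1.symm

/-- **Average stationarity of SGD**: for an `L`-smooth objective `J` bounded below by `Jinf`,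
SGD iterates `W (t+1) = W t - η • G t` with unbiased stochastic gradients of conditional
variance at most `σ²` and step size `η ∈ (0, 1/L]` satisfy, for every `T ≥ 1`,
`(1/T) Σ_{t<T} E[‖∇J(W t)‖²] ≤ 2 (E[J(W 0)] - Jinf)/(η T) + L η σ²`. -/
theorem sgd_avg_expected_sq_grad_le
    {E : Type*} [NormedAddCommGroup E] [InnerProductSpace ℝ E] [CompleteSpace E]
    {Ω : Type*} {mΩ : MeasurableSpace Ω} {μ : Measure Ω} [IsProbabilityMeasure μ]
    (ℱ : Filtration ℕ mΩ)
    (J : E → ℝ) (L Jinf σ η : ℝ)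
    (hL : 0 < L)
    (hdiff : Differentiable ℝ J)
    (hlip : ∀ x y : E, ‖gradient J x - gradient J y‖ ≤ L * ‖x - y‖)
    (hbd : ∀ x : E, Jinf ≤ J x)
    (hη : 0 < η) (hηL : η ≤ 1 / L)
    (W G : ℕ → Ω → E)
    (hWmeas : ∀ t, StronglyMeasurable[ℱ t] (W t))
    (hrec : ∀ t ω, W (t + 1) ω = W t ω - η • G t ω)
    (hmean : ∀ t, μ[G t | ℱ t] =ᵐ[μ] fun ω => gradient J (W t ω))
    (hvar : ∀ t, ∀ᵐ ω ∂μ,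
      (μ[fun ω' => ‖G t ω' - gradient J (W t ω')‖ ^ 2 | ℱ t]) ω ≤ σ ^ 2)
    (hJint : ∀ t, Integrable (fun ω => J (W t ω)) μ)
    (hGint : ∀ t, Integrable (fun ω => ‖G t ω‖ ^ 2) μ)
    (T : ℕ) (hT : 1 ≤ T) :
    (1 / (T : ℝ)) * ∑ t ∈ Finset.range T, ∫ ω, ‖gradient J (W t ω)‖ ^ 2 ∂μ
      ≤ 2 * ((∫ ω, J (W 0 ω) ∂μ) - Jinf) / (η * T) + L * η * σ ^ 2 := by
  have hm : ∀ t, ℱ t ≤ mΩ := fun t => ℱ.le t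
  have hgradlip : LipschitzWith (Real.toNNReal L) (gradient J) := by
    rw [lipschitzWith_iff_dist_le_mul]
    intro x y
    rw [dist_eq_norm, dist_eq_norm, Real.coe_toNNReal _ hL.le]
    exact hlip x y
  have hfmeas : ∀ t, StronglyMeasurable[ℱ t] fun ω => gradient J (W t ω) := fun t =>
    hgradlip.continuous.comp_stronglyMeasurable (hWmeas t)
  have hfmeas' : ∀ t, AEStronglyMeasurable (fun ω => gradient J (W t ω)) μ := fun t =>
    ((hfmeas t).mono (hm t)).aestronglyMeasurable
  have hfsq_int : ∀ t, Integrable (fun ω => ‖gradient J (W t ω)‖ ^ 2) μ := by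
    intro t
    refine Integrable.mono' (((hJint t).sub (integrable_const Jinf)).const_mul (2 * L))
      ((continuous_pow 2).comp_aestronglyMeasurable (hfmeas' t).norm) ?_
    refine Filter.Eventually.of_forall fun ω => ?_
    simp only [Pi.sub_apply, Function.comp_apply]
    rw [Real.norm_of_nonneg (by positivity : (0:ℝ) ≤ ‖gradient J (W t ω)‖ ^ 2)]
    exact sgd_grad_sq_le J L Jinf hL hdiff hlip hbd (W t ω)
  have hf2 : ∀ t, MemLp (fun ω => gradient J (W t ω)) 2 μ := fun t =>
    (memLp_two_iff_integrable_sq_norm (hfmeas' t)).mpr (hfsq_int t)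
  have hGmeas : ∀ t, AEStronglyMeasurable (G t) μ := by
    intro t
    have hGeq : G t = fun ω => η⁻¹ • (W t ω - W (t + 1) ω) := by
      funext ω
      rw [hrec t ω]
      rw [sub_sub_cancel, smul_smul, inv_mul_cancel₀ hη.ne', one_smul]
    rw [hGeq]
    exact (((((hWmeas t).mono (ℱ.mono (Nat.le_succ t))).sub
      (hWmeas (t + 1))).const_smul η⁻¹).mono (hm (t + 1))).aestronglyMeasurable
  have hG2 : ∀ t, MemLp (G t) 2 μ := fun t =>
    (memLp_two_iff_integrable_sq_norm (hGmeas t)).mpr (hGint t)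
  have hD2 : ∀ t, MemLp (fun ω => G t ω - gradient J (W t ω)) 2 μ := fun t =>
    (hG2 t).sub (hf2 t)
  have hXint : ∀ t, Integrable (fun ω => ‖G t ω - gradient J (W t ω)‖ ^ 2) μ := fun t =>
    (memLp_two_iff_integrable_sq_norm (hD2 t).aestronglyMeasurable).mp (hD2 t)
  have hvar' : ∀ t, ∫ ω, ‖G t ω - gradient J (W t ω)‖ ^ 2 ∂μ ≤ σ ^ 2 := by
    intro t
    have h1 := (integral_condExp (μ := μ)
      (f := fun ω' => ‖G t ω' - gradient J (W t ω')‖ ^ 2) (hm t)).symm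
    rw [h1]
    calc ∫ ω, (μ[fun ω' => ‖G t ω' - gradient J (W t ω')‖ ^ 2|ℱ t]) ω ∂μ
        ≤ ∫ _ω, σ ^ 2 ∂μ :=
          integral_mono_ae integrable_condExp (integrable_const _) (hvar t)
      _ = σ ^ 2 := by simp
  have hcross : ∀ t, ∫ ω, ⟪gradient J (W t ω), G t ω⟫ ∂μ
      = ∫ ω, ‖gradient J (W t ω)‖ ^ 2 ∂μ := fun t =>
    sgd_integral_inner_eq (hm t) ((hfmeas t).aestronglyMeasurable) (hf2 t) (hG2 t) (hmean t)
  have hinner_int : ∀ t, Integrable (fun ω => ⟪gradient J (W t ω), G t ω⟫) μ := by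
    intro t
    refine Integrable.mono' (((hfsq_int t).add (hGint t)).const_mul (1 / 2))
      ((hfmeas' t).inner (hGmeas t)) ?_
    refine Filter.Eventually.of_forall fun ω => ?_
    have h1 := abs_real_inner_le_norm (gradient J (W t ω)) (G t ω)
    have h2 : ‖gradient J (W t ω)‖ * ‖G t ω‖
        ≤ 1 / 2 * (‖gradient J (W t ω)‖ ^ 2 + ‖G t ω‖ ^ 2) := by
      nlinarith [sq_nonneg (‖gradient J (W t ω)‖ - ‖G t ω‖)]
    exact (Real.norm_eq_abs _ ▸ h1).trans h2
  have hGsq : ∀ t, ∫ ω, ‖G t ω‖ ^ 2 ∂μ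
      ≤ σ ^ 2 + ∫ ω, ‖gradient J (W t ω)‖ ^ 2 ∂μ := by
    intro t
    have hexp : (fun ω => ‖G t ω‖ ^ 2) = fun ω =>
        ‖G t ω - gradient J (W t ω)‖ ^ 2 + 2 * ⟪gradient J (W t ω), G t ω⟫
          - ‖gradient J (W t ω)‖ ^ 2 := by
      funext ω
      have h := norm_sub_sq_real (G t ω) (gradient J (W t ω))
      have h2 := real_inner_comm (G t ω) (gradient J (W t ω))
      linarith
    calc ∫ ω, ‖G t ω‖ ^ 2 ∂μ
        = (∫ ω, ‖G t ω - gradient J (W t ω)‖ ^ 2 ∂μ)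
          + 2 * ∫ ω, ⟪gradient J (W t ω), G t ω⟫ ∂μ
          - ∫ ω, ‖gradient J (W t ω)‖ ^ 2 ∂μ := by
          have e1 : ∫ ω, (‖G t ω - gradient J (W t ω)‖ ^ 2
                + 2 * ⟪gradient J (W t ω), G t ω⟫
                - ‖gradient J (W t ω)‖ ^ 2) ∂μ
              = (∫ ω, (‖G t ω - gradient J (W t ω)‖ ^ 2
                + 2 * ⟪gradient J (W t ω), G t ω⟫) ∂μ)
                - ∫ ω, ‖gradient J (W t ω)‖ ^ 2 ∂μ :=
            integral_sub ((hXint t).add ((hinner_int t).const_mul 2)) (hfsq_int t)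
          have e2 : ∫ ω, (‖G t ω - gradient J (W t ω)‖ ^ 2
                + 2 * ⟪gradient J (W t ω), G t ω⟫) ∂μ
              = (∫ ω, ‖G t ω - gradient J (W t ω)‖ ^ 2 ∂μ)
                + ∫ ω, 2 * ⟪gradient J (W t ω), G t ω⟫ ∂μ :=
            integral_add (hXint t) ((hinner_int t).const_mul 2)
          have e3 : ∫ ω, 2 * ⟪gradient J (W t ω), G t ω⟫ ∂μ
              = 2 * ∫ ω, ⟪gradient J (W t ω), G t ω⟫ ∂μ :=
            integral_const_mul 2 _
          rw [hexp, e1, e2, e3]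
      _ = (∫ ω, ‖G t ω - gradient J (W t ω)‖ ^ 2 ∂μ)
          + ∫ ω, ‖gradient J (W t ω)‖ ^ 2 ∂μ := by rw [hcross t]; ring
      _ ≤ σ ^ 2 + ∫ ω, ‖gradient J (W t ω)‖ ^ 2 ∂μ := by linarith [hvar' t]
  have hstep : ∀ t, ∫ ω, J (W (t + 1) ω) ∂μ
      ≤ (∫ ω, J (W t ω) ∂μ) - η * (∫ ω, ⟪gradient J (W t ω), G t ω⟫ ∂μ)
        + L * η ^ 2 / 2 * ∫ ω, ‖G t ω‖ ^ 2 ∂μ := by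
    intro t
    have hpt : ∀ ω, J (W (t + 1) ω) ≤ J (W t ω) - η * ⟪gradient J (W t ω), G t ω⟫
        + L * η ^ 2 / 2 * ‖G t ω‖ ^ 2 := by
      intro ω
      have h := sgd_descent_lemma J L hL.le hdiff hlip (W t ω) (W (t + 1) ω)
      have hd : W (t + 1) ω - W t ω = -(η • G t ω) := by rw [hrec t ω]; abel
      rw [hd, inner_neg_right, real_inner_smul_right, norm_neg, norm_smul] at h
      have h2 : (‖η‖ * ‖G t ω‖) ^ 2 = η ^ 2 * ‖G t ω‖ ^ 2 := by
        rw [mul_pow, Real.norm_eq_abs, sq_abs]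
      rw [h2] at h
      linarith
    calc ∫ ω, J (W (t + 1) ω) ∂μ
        ≤ ∫ ω, (J (W t ω) - η * ⟪gradient J (W t ω), G t ω⟫
            + L * η ^ 2 / 2 * ‖G t ω‖ ^ 2) ∂μ := by
          refine integral_mono (hJint (t + 1)) ?_ hpt
          exact ((hJint t).sub ((hinner_int t).const_mul η)).add ((hGint t).const_mul _)
      _ = (∫ ω, J (W t ω) ∂μ) - η * (∫ ω, ⟪gradient J (W t ω), G t ω⟫ ∂μ)
          + L * η ^ 2 / 2 * ∫ ω, ‖G t ω‖ ^ 2 ∂μ := by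
          have e1 : ∫ ω, (J (W t ω) - η * ⟪gradient J (W t ω), G t ω⟫
                + L * η ^ 2 / 2 * ‖G t ω‖ ^ 2) ∂μ
              = (∫ ω, (J (W t ω) - η * ⟪gradient J (W t ω), G t ω⟫) ∂μ)
                + ∫ ω, L * η ^ 2 / 2 * ‖G t ω‖ ^ 2 ∂μ :=
            integral_add ((hJint t).sub ((hinner_int t).const_mul η))
              ((hGint t).const_mul _)
          have e2 : ∫ ω, (J (W t ω) - η * ⟪gradient J (W t ω), G t ω⟫) ∂μ
              = (∫ ω, J (W t ω) ∂μ) - ∫ ω, η * ⟪gradient J (W t ω), G t ω⟫ ∂μ :=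
            integral_sub (hJint t) ((hinner_int t).const_mul η)
          have e3 : ∫ ω, η * ⟪gradient J (W t ω), G t ω⟫ ∂μ
              = η * ∫ ω, ⟪gradient J (W t ω), G t ω⟫ ∂μ := integral_const_mul η _
          have e4 : ∫ ω, L * η ^ 2 / 2 * ‖G t ω‖ ^ 2 ∂μ
              = L * η ^ 2 / 2 * ∫ ω, ‖G t ω‖ ^ 2 ∂μ := integral_const_mul _ _
          rw [e1, e2, e3, e4]
  have hkey : ∀ t, η / 2 * ∫ ω, ‖gradient J (W t ω)‖ ^ 2 ∂μ
      ≤ (∫ ω, J (W t ω) ∂μ) - (∫ ω, J (W (t + 1) ω) ∂μ) + L * η ^ 2 * σ ^ 2 / 2 := by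
    intro t
    have h1 := hstep t
    rw [hcross t] at h1
    have h2 := hGsq t
    have ha : 0 ≤ ∫ ω, ‖gradient J (W t ω)‖ ^ 2 ∂μ :=
      integral_nonneg fun ω => by positivity
    have hLη : L * η ≤ 1 := by
      rw [div_eq_mul_inv, one_mul] at hηL
      calc L * η ≤ L * L⁻¹ := by
            exact mul_le_mul_of_nonneg_left hηL hL.le
        _ = 1 := mul_inv_cancel₀ hL.ne'
    nlinarith [mul_le_mul_of_nonneg_left h2 (by positivity : (0:ℝ) ≤ L * η ^ 2 / 2),
      mul_nonneg (mul_nonneg hη.le ha) (sub_nonneg.mpr hLη)]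
  -- summation
  set a : ℕ → ℝ := fun t => ∫ ω, ‖gradient J (W t ω)‖ ^ 2 ∂μ with haa
  set b : ℕ → ℝ := fun t => ∫ ω, J (W t ω) ∂μ with hbb
  have hsum : η / 2 * ∑ t ∈ Finset.range T, a t
      ≤ b 0 - b T + T * (L * η ^ 2 * σ ^ 2 / 2) := by
    rw [Finset.mul_sum]
    calc ∑ t ∈ Finset.range T, η / 2 * a t
        ≤ ∑ t ∈ Finset.range T, (b t - b (t + 1) + L * η ^ 2 * σ ^ 2 / 2) :=
          Finset.sum_le_sum fun t _ => hkey t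
      _ = b 0 - b T + T * (L * η ^ 2 * σ ^ 2 / 2) := by
          rw [Finset.sum_add_distrib, Finset.sum_range_sub' b, Finset.sum_const,
            Finset.card_range, nsmul_eq_mul]
  have hbT : Jinf ≤ b T := by
    have : (Jinf : ℝ) = ∫ _ω, Jinf ∂μ := by simp
    rw [this]
    exact integral_mono (integrable_const _) (hJint T) fun ω => hbd _
  have hTpos : (0 : ℝ) < T := by exact_mod_cast hT
  have hS : 0 ≤ ∑ t ∈ Finset.range T, a t :=
    Finset.sum_nonneg fun t _ => integral_nonneg fun ω => by positivity
  have hfin : ∑ t ∈ Finset.range T, a t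
      ≤ 2 * (b 0 - Jinf) / η + T * (L * η * σ ^ 2) := by
    have h1 : η / 2 * ∑ t ∈ Finset.range T, a t
        ≤ (b 0 - Jinf) + T * (L * η ^ 2 * σ ^ 2 / 2) := by linarith
    have h2 := mul_le_mul_of_nonneg_left h1 (by positivity : (0:ℝ) ≤ 2 / η)
    calc ∑ t ∈ Finset.range T, a t
        = 2 / η * (η / 2 * ∑ t ∈ Finset.range T, a t) := by
          field_simp
      _ ≤ 2 / η * ((b 0 - Jinf) + T * (L * η ^ 2 * σ ^ 2 / 2)) := h2
      _ = 2 * (b 0 - Jinf) / η + T * (L * η * σ ^ 2) := by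
          field_simp
  calc (1 / (T : ℝ)) * ∑ t ∈ Finset.range T, a t
      ≤ (1 / (T : ℝ)) * (2 * (b 0 - Jinf) / η + T * (L * η * σ ^ 2)) :=
        mul_le_mul_of_nonneg_left hfin (by positivity)
    _ = 2 * (b 0 - Jinf) / (η * T) + L * η * σ ^ 2 := by
        field_simp
end

section
/- Let E be a real inner product space, L : E → ℝ, and W, V ∈ E with V ≠ 0. Suppose L is twice continuously differentiable on an open set containing the segment {W + (γ/2)·V : γ ∈ [0, 1]}, with gradient ∇L and Hessian ∇²L, and define μ(V) := (2/‖V‖²)·∫₀¹ (1 − γ)·⟨V, ∇²L(W + (γ/2)V)[V]⟩ dγ. Let ε ≥ 0 satisfy ‖∇L(W)‖ ≤ ε. If μ(V) > 0 and ‖V‖ > 4·ε/μ(V), then L(W + V/2) > L(W). -/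
open scoped RealInnerProductSpace

set_option maxHeartbeats 800000 in
/-- **When degradation becomes guaranteed**: if `L` is `C²` on an open set containing the
merge path `{W + (γ/2) • V : γ ∈ [0,1]}`, `μV` is the weighted directional curvature along
the path, `‖∇L(W)‖ ≤ ε`, `μV > 0`, and `‖V‖ > 4ε/μV`, then `L(W + V/2) > L(W)`. -/
theorem merge_degradation_guaranteed
    {E : Type*} [NormedAddCommGroup E] [InnerProductSpace ℝ E] [CompleteSpace E]
    (L : E → ℝ) (W V : E) (hV : V ≠ 0)
    (U : Set E) (hU : IsOpen U)
    (hseg : ∀ γ ∈ Set.Icc (0 : ℝ) 1, W + (γ / 2) • V ∈ U)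
    (hC2 : ContDiffOn ℝ 2 L U)
    (μV : ℝ)
    (hμV : μV = (2 / ‖V‖ ^ 2) *
      ∫ γ in (0 : ℝ)..1, (1 - γ) * ((fderiv ℝ (fderiv ℝ L) (W + (γ / 2) • V)) V V))
    (ε : ℝ) (hε : 0 ≤ ε)
    (hgrad : ‖gradient L W‖ ≤ ε)
    (hμVpos : 0 < μV)
    (hVbig : ‖V‖ > 4 * ε / μV) :
    L (W + (1 / 2 : ℝ) • V) > L W := by
  set φ : ℝ → E := fun t => W + (t / 2) • V with hφ
  set V₂ : E := (2 : ℝ)⁻¹ • V with hV₂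
  -- derivative of the path
  have hφd : ∀ t : ℝ, HasDerivAt φ V₂ t := by
    intro t
    have h1 : HasDerivAt (fun t : ℝ => t) 1 t := hasDerivAt_id t
    have h2 := (h1.smul_const V₂).const_add W
    simpa [φ, V₂, smul_smul, div_eq_mul_inv] using h2
  have hφmem : ∀ t ∈ Set.Icc (0 : ℝ) 1, φ t ∈ U := fun t ht => hseg t ht
  -- differentiability facts on U
  have hC1 : ContDiffOn ℝ 1 (fderiv ℝ L) U := by
    have := ContDiffOn.fderiv_of_isOpen (m := 1) hC2 hU (by norm_num)
    exact this
  have hLd : ∀ x ∈ U, HasFDerivAt L (fderiv ℝ L x) x := fun x hx =>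
    ((hC2.differentiableOn two_ne_zero).differentiableAt (hU.mem_nhds hx)).hasFDerivAt
  have hL2d : ∀ x ∈ U, HasFDerivAt (fderiv ℝ L) (fderiv ℝ (fderiv ℝ L) x) x := fun x hx =>
    ((hC1.differentiableOn one_ne_zero).differentiableAt (hU.mem_nhds hx)).hasFDerivAt
  -- g and its derivatives
  set g : ℝ → ℝ := fun t => L (φ t) with hg
  set g' : ℝ → ℝ := fun t => fderiv ℝ L (φ t) V₂ with hg'
  set Q : ℝ → ℝ := fun t => fderiv ℝ (fderiv ℝ L) (φ t) V V with hQ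
  have hgd : ∀ t ∈ Set.Icc (0 : ℝ) 1, HasDerivAt g (g' t) t := by
    intro t ht
    exact (hLd (φ t) (hφmem t ht)).comp_hasDerivAt t (hφd t)
  have hg'd : ∀ t ∈ Set.Icc (0 : ℝ) 1, HasDerivAt g' (4⁻¹ * Q t) t := by
    intro t ht
    have hc : HasDerivAt (fun t => fderiv ℝ L (φ t))
        (fderiv ℝ (fderiv ℝ L) (φ t) V₂) t :=
      (hL2d (φ t) (hφmem t ht)).comp_hasDerivAt t (hφd t)
    have := hc.clm_apply (hasDerivAt_const t V₂)
    simp only [map_zero, add_zero] at this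
    refine this.congr_deriv ?_
    simp [Q, V₂, smul_smul]
    ring
  -- FTC: integral of (1-t) * g''(t)
  have hQcont : ContinuousOn Q (Set.Icc 0 1) := by
    have hcont : ContinuousOn (fderiv ℝ (fderiv ℝ L)) U := by
      have := ContDiffOn.fderiv_of_isOpen (m := 0) hC1 hU (by norm_num)
      exact this.continuousOn
    have hφc : Continuous φ := by continuity
    exact ((hcont.comp hφc.continuousOn hφmem).clm_apply continuousOn_const).clm_apply
      continuousOn_const
  set F : ℝ → ℝ := fun t => (1 - t) * g' t + g t with hF
  have hFd : ∀ t ∈ Set.uIcc (0 : ℝ) 1, HasDerivAt F ((1 - t) * (4⁻¹ * Q t)) t := by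
    intro t ht
    rw [Set.uIcc_of_le zero_le_one] at ht
    have h1 : HasDerivAt (fun t : ℝ => 1 - t) (-1) t := by
      simpa using ((hasDerivAt_id t).const_sub 1)
    have := (h1.mul (hg'd t ht)).add (hgd t ht)
    refine this.congr_deriv ?_
    ring
  have hint : IntervalIntegrable (fun t => (1 - t) * (4⁻¹ * Q t)) MeasureTheory.volume 0 1 := by
    apply ContinuousOn.intervalIntegrable
    rw [Set.uIcc_of_le zero_le_one]
    exact (continuousOn_const.sub continuousOn_id).mul (continuousOn_const.mul hQcont)
  have hFTC := intervalIntegral.integral_eq_sub_of_hasDerivAt hFd hint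
  -- rewrite the integral
  have hIQ : (∫ t in (0:ℝ)..1, (1 - t) * (4⁻¹ * Q t))
      = 4⁻¹ * ∫ t in (0:ℝ)..1, (1 - t) * Q t := by
    rw [← intervalIntegral.integral_const_mul]
    congr 1; ext t; ring
  have hIval : (∫ t in (0:ℝ)..1, (1 - t) * Q t) = μV * ‖V‖ ^ 2 / 2 := by
    have hVnorm : (0 : ℝ) < ‖V‖ := norm_pos_iff.mpr hV
    rw [hμV]
    field_simp
    rfl
  have hF1 : F 1 = g 1 := by simp [F]
  have hF0 : F 0 = g' 0 + g 0 := by simp [F]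
  have hkey : g 1 - g 0 = g' 0 + μV * ‖V‖ ^ 2 / 8 := by
    have : g 1 - (g' 0 + g 0) = 4⁻¹ * (μV * ‖V‖ ^ 2 / 2) := by
      rw [← hF1, ← hF0, ← hFTC, hIQ, hIval]
    linarith
  -- bound on g' 0
  have hg'0 : |g' 0| ≤ ε * ‖V‖ / 2 := by
    have heq : ‖fderiv ℝ L W‖ = ‖gradient L W‖ := by
      rw [gradient, LinearIsometryEquiv.norm_map]
    have h1 : |g' 0| ≤ ‖fderiv ℝ L W‖ * ‖V₂‖ := by
      have h0 : φ 0 = W := by simp [φ]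
      have : g' 0 = fderiv ℝ L W V₂ := by rw [hg']; simp only; rw [h0]
      rw [this]
      exact (fderiv ℝ L W).le_opNorm V₂
    have h2 : ‖V₂‖ = ‖V‖ / 2 := by
      rw [hV₂, norm_smul]
      simp [norm_inv]
      ring
    calc |g' 0| ≤ ‖fderiv ℝ L W‖ * ‖V₂‖ := h1
      _ = ‖gradient L W‖ * (‖V‖ / 2) := by rw [heq, h2]
      _ ≤ ε * (‖V‖ / 2) := by
          apply mul_le_mul_of_nonneg_right hgrad (by positivity)
      _ = ε * ‖V‖ / 2 := by ring
  -- final inequality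
  have hg0 : g 0 = L W := by simp [g, φ]
  have hg1 : g 1 = L (W + (1 / 2 : ℝ) • V) := by norm_num [g, φ]
  have hVnorm : (0 : ℝ) < ‖V‖ := norm_pos_iff.mpr hV
  have hmul : μV * ‖V‖ > 4 * ε := by
    rw [gt_iff_lt, div_lt_iff₀ hμVpos] at hVbig
    linarith
  have habs := abs_le.mp hg'0
  rw [← hg1, ← hg0]
  nlinarith [hkey, habs.1, hVnorm, sq_nonneg ‖V‖]
end
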